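/- arXiv:1205.4204 — 3 statements merged into one kernel-verified Lean document; each statement's English description precedes it below -/
import Mathlib

section
/- Let Σ be a fan in Q^k all of whose maximal cones are k-dimensional, and suppose the support |Σ| (the union of all cones of Σ) is a convex set. Let τ ∈ Σ be a cone whose intersection with the topological interior of |Σ| is nonempty. Then τ equals the intersection of all k-dimensional cones σ ∈ Σ with τ ⪯ σ (τ a face of σ). -/
/-- A convex cone in `ℚ^k`, modeled as a set containing `0`, closed under
addition and multiplication by nonnegative rationals. -/
def IsCone {k : ℕ} (σ : Set (Fin k → ℚ)) : Prop :=
  (0 : Fin k → ℚ) ∈ σ ∧ (∀ x ∈ σ, ∀ y ∈ σ, x + y ∈ σ) ∧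
    ∀ c : ℚ, 0 ≤ c → ∀ x ∈ σ, c • x ∈ σ

/-- `τ` is a face of `σ`: `τ ⊆ σ` and whenever a sum of two elements of `σ`
lies in `τ`, both summands lie in `τ`. -/
def IsFaceOf {k : ℕ} (τ σ : Set (Fin k → ℚ)) : Prop :=
  τ ⊆ σ ∧ ∀ x ∈ σ, ∀ y ∈ σ, x + y ∈ τ → x ∈ τ ∧ y ∈ τ

/-- The cone generated by a set: all finite nonnegative combinations. -/
def genCone {k : ℕ} (s : Set (Fin k → ℚ)) : Set (Fin k → ℚ) :=
  {x | ∃ (t : Finset (Fin k → ℚ)) (c : (Fin k → ℚ) → ℚ),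
    ↑t ⊆ s ∧ (∀ v, 0 ≤ c v) ∧ x = ∑ v ∈ t, c v • v}

/-- A polyhedral cone is a cone generated by finitely many vectors. -/
def IsPolyhedral {k : ℕ} (σ : Set (Fin k → ℚ)) : Prop :=
  ∃ s : Finset (Fin k → ℚ), σ = genCone ↑s

/-- The dimension of a cone: the dimension of its linear span. -/
noncomputable def coneDim {k : ℕ} (σ : Set (Fin k → ℚ)) : ℕ :=
  Module.finrank ℚ (Submodule.span ℚ σ)

/-- A fan in `ℚ^k`: a finite collection of convex polyhedral cones, closed
under taking faces, such that the intersection of any two of its cones is a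
face of each. -/
structure IsFan {k : ℕ} (F : Set (Set (Fin k → ℚ))) : Prop where
  finite : F.Finite
  cone : ∀ σ ∈ F, IsCone σ ∧ IsPolyhedral σ
  faces : ∀ σ ∈ F, ∀ τ, IsCone τ → IsFaceOf τ σ → τ ∈ F
  inter : ∀ σ ∈ F, ∀ σ' ∈ F, IsFaceOf (σ ∩ σ') σ ∧ IsFaceOf (σ ∩ σ') σ'

lemma genCone_mono {k : ℕ} {s s' : Set (Fin k → ℚ)} (h : s ⊆ s') : genCone s ⊆ genCone s' := by
  rintro x ⟨t, c, hts, hc, rfl⟩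
  exact ⟨t, c, hts.trans h, hc, rfl⟩

lemma genCone_subset_span {k : ℕ} {s : Set (Fin k → ℚ)} :
    genCone s ⊆ (Submodule.span ℚ s : Set (Fin k → ℚ)) := by
  rintro x ⟨t, c, hts, hc, rfl⟩
  exact Submodule.sum_mem _ fun v hv =>
    Submodule.smul_mem _ _ (Submodule.subset_span (hts hv))

lemma mem_genCone_of_coeffs {k : ℕ} {t : Finset (Fin k → ℚ)} {x : Fin k → ℚ}
    (c : (Fin k → ℚ) → ℚ) (hc : ∀ v ∈ t, 0 ≤ c v) (hx : x = ∑ v ∈ t, c v • v) :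
    x ∈ genCone (↑t : Set (Fin k → ℚ)) := by
  classical
  refine ⟨t, fun v => if v ∈ t then c v else 0, subset_rfl, ?_, ?_⟩
  · intro v
    by_cases h : v ∈ t
    · simpa [h] using hc v h
    · simp [h]
  · rw [hx]
    exact Finset.sum_congr rfl fun v hv => by simp [hv]

lemma caratheodory_aux {k : ℕ} : ∀ (n : ℕ) (t : Finset (Fin k → ℚ)), t.card ≤ n →
    ∀ (c : (Fin k → ℚ) → ℚ), (∀ v, 0 ≤ c v) →
    ∃ t' : Finset (Fin k → ℚ), t' ⊆ t ∧
      LinearIndependent ℚ (fun v : (↑t' : Set (Fin k → ℚ)) => (v : Fin k → ℚ)) ∧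
      (∑ v ∈ t, c v • v) ∈ genCone (↑t' : Set (Fin k → ℚ)) := by
  classical
  intro n
  induction n with
  | zero =>
    intro t ht c hc
    have : t = ∅ := Finset.card_eq_zero.mp (Nat.le_zero.mp ht)
    subst this
    refine ⟨∅, subset_rfl, ?_, ?_⟩
    · rw [Finset.coe_empty]
      exact linearIndependent_empty ℚ _
    · exact mem_genCone_of_coeffs c (fun v hv => hc v) rfl
  | succ n ih =>
    intro t ht c hc
    by_cases li : LinearIndependent ℚ (fun v : (↑t : Set (Fin k → ℚ)) => (v : Fin k → ℚ))
    · exact ⟨t, subset_rfl, li, mem_genCone_of_coeffs c (fun v _ => hc v) rfl⟩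
    · obtain ⟨g, hg0, i₀, hgi₀⟩ := Fintype.not_linearIndependent_iff.mp li
      -- turn g into a function on vectors
      set d : (Fin k → ℚ) → ℚ := fun v => if h : v ∈ t then g ⟨v, h⟩ else 0 with hd
      have hdsum : ∑ v ∈ t, d v • v = 0 := by
        rw [← hg0]
        rw [← Finset.sum_coe_sort t (fun v => d v • v)]
        apply Finset.sum_congr rfl
        intro v _
        simp [hd, v.2]
      have hdne : d (i₀ : Fin k → ℚ) ≠ 0 := by
        simpa [hd, i₀.2] using hgi₀
      have hi₀t : (i₀ : Fin k → ℚ) ∈ t := i₀.2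
      have step : ∀ e : (Fin k → ℚ) → ℚ, (∑ v ∈ t, e v • v = 0) →
          ∀ v₀, v₀ ∈ t → 0 < e v₀ →
          ∃ t' : Finset (Fin k → ℚ), t' ⊆ t ∧
            LinearIndependent ℚ (fun v : (↑t' : Set (Fin k → ℚ)) => (v : Fin k → ℚ)) ∧
            (∑ v ∈ t, c v • v) ∈ genCone (↑t' : Set (Fin k → ℚ)) := by
        intro e hesum v₀ hv₀ hv₀pos
        set P := t.filter (fun v => 0 < e v) with hP
        have hPne : P.Nonempty := ⟨v₀, Finset.mem_filter.mpr ⟨hv₀, hv₀pos⟩⟩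
        obtain ⟨u, huP, humin⟩ := Finset.exists_min_image P (fun v => c v / e v) hPne
        have hut : u ∈ t := (Finset.mem_filter.mp huP).1
        have hue : 0 < e u := (Finset.mem_filter.mp huP).2
        set r := c u / e u with hr
        have hr0 : 0 ≤ r := div_nonneg (hc u) hue.le
        set c' : (Fin k → ℚ) → ℚ := fun v => if v ∈ t.erase u then c v - r * e v else 0 with hc'
        have hc'0 : ∀ v, 0 ≤ c' v := by
          intro v
          simp only [hc']
          split
          · rename_i hv
            have hvt : v ∈ t := Finset.mem_of_mem_erase hv
            rcases le_or_gt (e v) 0 with hev | hev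
            · have hre : r * e v ≤ 0 := mul_nonpos_of_nonneg_of_nonpos hr0 hev
              linarith [hc v]
            · have hvP : v ∈ P := Finset.mem_filter.mpr ⟨hvt, hev⟩
              have hmin := humin v hvP
              rw [le_div_iff₀ hev] at hmin
              linarith
          · exact le_refl 0
        have hsum' : ∑ v ∈ t.erase u, c' v • v = ∑ v ∈ t, c v • v := by
          have h1 : ∑ v ∈ t.erase u, c' v • v = ∑ v ∈ t.erase u, (c v - r * e v) • v :=
            Finset.sum_congr rfl fun v hv => by simp only [hc']; rw [if_pos hv]
          have h2 : ∑ v ∈ t, (c v - r * e v) • v = ∑ v ∈ t.erase u, (c v - r * e v) • v := by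
            rw [← Finset.sum_erase_add t _ hut]
            have hz : (c u - r * e u) • u = 0 := by
              rw [hr, div_mul_cancel₀ _ hue.ne', sub_self, zero_smul]
            rw [hz, add_zero]
          have h3 : ∑ v ∈ t, (c v - r * e v) • v
              = ∑ v ∈ t, c v • v - r • ∑ v ∈ t, e v • v := by
            rw [Finset.smul_sum, ← Finset.sum_sub_distrib]
            exact Finset.sum_congr rfl fun v _ => by rw [sub_smul, smul_smul]
          rw [h1, ← h2, h3, hesum, smul_zero, sub_zero]
        have hcard : (t.erase u).card ≤ n := by
          have := Finset.card_erase_lt_of_mem hut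
          omega
        obtain ⟨t', ht'sub, hli, hmem⟩ := ih (t.erase u) hcard c' hc'0
        exact ⟨t', ht'sub.trans (Finset.erase_subset u t), hli, by rwa [hsum'] at hmem⟩
      rcases lt_or_gt_of_ne hdne with hneg | hpos
      · refine step (-d) ?_ _ hi₀t (by simpa using hneg)
        simp only [Pi.neg_apply, neg_smul]
        rw [Finset.sum_neg_distrib, hdsum, neg_zero]
      · exact step d hdsum _ hi₀t hpos

lemma caratheodory {k : ℕ} {s : Finset (Fin k → ℚ)} {x : Fin k → ℚ}
    (hx : x ∈ genCone (↑s : Set (Fin k → ℚ))) :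
    ∃ t : Finset (Fin k → ℚ), t ⊆ s ∧
      LinearIndependent ℚ (fun v : (↑t : Set (Fin k → ℚ)) => (v : Fin k → ℚ)) ∧
      x ∈ genCone (↑t : Set (Fin k → ℚ)) := by
  obtain ⟨t₀, c, hts, hc, rfl⟩ := hx
  obtain ⟨t, hsub, hli, hmem⟩ := caratheodory_aux t₀.card t₀ le_rfl c hc
  exact ⟨t, hsub.trans (by exact_mod_cast Finset.coe_subset.mp hts), hli, hmem⟩

lemma exists_dual_family {k : ℕ} {t : Finset (Fin k → ℚ)}
    (li : LinearIndependent ℚ (fun v : (↑t : Set (Fin k → ℚ)) => (v : Fin k → ℚ))) :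
    ∃ f : (Fin k → ℚ) → ((Fin k → ℚ) →ₗ[ℚ] ℚ),
      ∀ u ∈ t, ∀ v ∈ t, f u v = if v = u then 1 else 0 := by
  classical
  have li' : LinearIndepOn ℚ id (↑t : Set (Fin k → ℚ)) := li
  set b := Module.Basis.extend li' with hb
  have hsub : (↑t : Set (Fin k → ℚ)) ⊆ li'.extend (Set.subset_univ _) :=
    li'.subset_extend _
  refine ⟨fun u => if hu : u ∈ t then b.coord ⟨u, hsub hu⟩ else 0, ?_⟩
  intro u hu v hv
  beta_reduce
  rw [dif_pos hu]
  have hv' : v = b ⟨v, hsub hv⟩ := (Module.Basis.extend_apply_self li' ⟨v, hsub hv⟩).symm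
  rw [Module.Basis.coord_apply]
  conv_lhs => rw [hv']
  rw [Module.Basis.repr_self, Finsupp.single_apply]
  simp [Subtype.ext_iff]

lemma dual_apply_sum {k : ℕ} {t : Finset (Fin k → ℚ)}
    (f : (Fin k → ℚ) → ((Fin k → ℚ) →ₗ[ℚ] ℚ))
    (hf : ∀ u ∈ t, ∀ v ∈ t, f u v = if v = u then 1 else 0)
    (c : (Fin k → ℚ) → ℚ) {u : Fin k → ℚ} (hu : u ∈ t) :
    f u (∑ v ∈ t, c v • v) = c u := by
  classical
  rw [map_sum]
  have : ∀ v ∈ t, f u (c v • v) = if v = u then c v else 0 := by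
    intro v hv
    rw [map_smul, hf u hu v hv, smul_eq_mul, mul_ite, mul_one, mul_zero]
  rw [Finset.sum_congr rfl this, Finset.sum_ite_eq' t u c, if_pos hu]

lemma nonneg_coord_of_mem {k : ℕ} {t : Finset (Fin k → ℚ)}
    (f : (Fin k → ℚ) → ((Fin k → ℚ) →ₗ[ℚ] ℚ))
    (hf : ∀ u ∈ t, ∀ v ∈ t, f u v = if v = u then 1 else 0)
    {y : Fin k → ℚ} (hy : y ∈ genCone (↑t : Set (Fin k → ℚ)))
    {u : Fin k → ℚ} (hu : u ∈ t) : 0 ≤ f u y := by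
  classical
  obtain ⟨t', c, ht', hc, rfl⟩ := hy
  have ht'' : t' ⊆ t := Finset.coe_subset.mp ht'
  have hext : ∑ v ∈ t', c v • v = ∑ v ∈ t, (if v ∈ t' then c v else 0) • v := by
    rw [← Finset.sum_subset ht'' (fun v hv hv' => by simp [hv'])]
    exact Finset.sum_congr rfl fun v hv => by simp [hv]
  rw [hext, dual_apply_sum f hf (fun v => if v ∈ t' then c v else 0) hu]
  by_cases h : u ∈ t' <;> simp [h, hc u]

lemma mem_genCone_of_coords {k : ℕ} {t : Finset (Fin k → ℚ)}
    (f : (Fin k → ℚ) → ((Fin k → ℚ) →ₗ[ℚ] ℚ))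
    (hf : ∀ u ∈ t, ∀ v ∈ t, f u v = if v = u then 1 else 0)
    {y : Fin k → ℚ} (hy : y ∈ Submodule.span ℚ (↑t : Set (Fin k → ℚ)))
    (h0 : ∀ u ∈ t, 0 ≤ f u y) : y ∈ genCone (↑t : Set (Fin k → ℚ)) := by
  obtain ⟨a, -, ha⟩ := Submodule.mem_span_finset.mp hy
  refine mem_genCone_of_coeffs a (fun v hv => ?_) ha.symm
  have h1 := h0 v hv
  rw [← ha, dual_apply_sum f hf a hv] at h1
  exact h1

lemma simplicial_closed {k : ℕ} {t : Finset (Fin k → ℚ)}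
    (li : LinearIndependent ℚ (fun v : (↑t : Set (Fin k → ℚ)) => (v : Fin k → ℚ)))
    {x w : Fin k → ℚ} {δ : ℚ} (hδ : 0 < δ) {S : Set ℕ} (hS : S.Infinite)
    (h : ∀ n ∈ S, x + (δ / ((n : ℚ) + 1)) • w ∈ genCone (↑t : Set (Fin k → ℚ))) :
    x ∈ genCone (↑t : Set (Fin k → ℚ)) := by
  classical
  obtain ⟨f, hf⟩ := exists_dual_family li
  obtain ⟨n₁, hn₁⟩ := hS.nonempty
  obtain ⟨n₂, hn₂S, hn₂⟩ := hS.exists_gt n₁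
  set ε₁ : ℚ := δ / ((n₁ : ℚ) + 1) with hε₁def
  set ε₂ : ℚ := δ / ((n₂ : ℚ) + 1) with hε₂def
  have hp1 : (0:ℚ) < (n₁:ℚ) + 1 := by positivity
  have hp2 : (0:ℚ) < (n₂:ℚ) + 1 := by positivity
  have hε₁ : 0 < ε₁ := div_pos hδ hp1
  have hlt : ε₂ < ε₁ := by
    apply div_lt_div_of_pos_left hδ hp1
    have : (n₁:ℚ) < (n₂:ℚ) := by exact_mod_cast hn₂
    linarith
  have hsp1 : x + ε₁ • w ∈ Submodule.span ℚ (↑t : Set (Fin k → ℚ)) :=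
    genCone_subset_span (h n₁ hn₁)
  have hsp2 : x + ε₂ • w ∈ Submodule.span ℚ (↑t : Set (Fin k → ℚ)) :=
    genCone_subset_span (h n₂ hn₂S)
  have hw : w ∈ Submodule.span ℚ (↑t : Set (Fin k → ℚ)) := by
    have hd : (x + ε₁ • w) - (x + ε₂ • w) = (ε₁ - ε₂) • w := by
      rw [sub_smul]; abel
    have h1 := Submodule.sub_mem _ hsp1 hsp2
    rw [hd] at h1
    have h2 := Submodule.smul_mem _ (ε₁ - ε₂)⁻¹ h1
    rwa [smul_smul, inv_mul_cancel₀ (by linarith : ε₁ - ε₂ ≠ 0), one_smul] at h2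
  have hx : x ∈ Submodule.span ℚ (↑t : Set (Fin k → ℚ)) := by
    have h1 := Submodule.sub_mem _ hsp1 (Submodule.smul_mem _ ε₁ hw)
    rwa [add_sub_cancel_right] at h1
  apply mem_genCone_of_coords f hf hx
  intro u hu
  by_contra hA
  push_neg at hA
  have key : ∀ n ∈ S, 0 ≤ f u x + (δ / ((n:ℚ) + 1)) * f u w := by
    intro n hn
    have h1 := nonneg_coord_of_mem f hf (h n hn) hu
    rwa [map_add, map_smul, smul_eq_mul] at h1
  rcases le_or_gt (f u w) 0 with hB | hB
  · have h1 := key n₁ hn₁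
    have h2 : ε₁ * f u w ≤ 0 := mul_nonpos_of_nonneg_of_nonpos hε₁.le hB
    rw [← hε₁def] at h1
    linarith
  · obtain ⟨N, hN⟩ := exists_nat_ge (δ * f u w / (-(f u x)))
    obtain ⟨n, hnS, hn⟩ := hS.exists_gt N
    have hn1 : (0:ℚ) < (n:ℚ) + 1 := by positivity
    have h1 := key n hnS
    have h2 : -(f u x) ≤ δ * f u w / ((n:ℚ) + 1) := by
      rw [div_mul_eq_mul_div] at h1
      linarith
    rw [le_div_iff₀ hn1] at h2
    have h4 : δ * f u w / (-(f u x)) < (n:ℚ) + 1 := by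
      have hNn : (N:ℚ) < (n:ℚ) := by exact_mod_cast hn
      linarith
    rw [div_lt_iff₀ (neg_pos.mpr hA)] at h4
    nlinarith

lemma interior_add_mem {k : ℕ} {S : Set (Fin k → ℚ)} (hadd : ∀ a ∈ S, ∀ b ∈ S, a + b ∈ S)
    {x₁ x₀ : Fin k → ℚ} (hx₁ : x₁ ∈ interior S) (hx₀ : x₀ ∈ S) : x₁ + x₀ ∈ interior S := by
  have h1 : (fun p => p + x₀) '' interior S ⊆ interior ((fun p => p + x₀) '' S) :=
    (isOpenMap_add_right x₀).image_interior_subset S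
  have h2 : (fun p => p + x₀) '' S ⊆ S := by
    rintro _ ⟨a, ha, rfl⟩; exact hadd a ha x₀ hx₀
  exact interior_mono h2 (h1 ⟨x₁, hx₁, rfl⟩)

lemma exists_seg {k : ℕ} {S : Set (Fin k → ℚ)} {x : Fin k → ℚ} (w : Fin k → ℚ)
    (hx : x ∈ interior S) :
    ∃ δ : ℚ, 0 < δ ∧ ∀ t : ℚ, 0 < t → t ≤ δ → x + t • w ∈ S := by
  have hcont : Continuous (fun t : ℚ => x + t • w) := by
    apply continuous_pi
    intro i
    simp only [Pi.add_apply, Pi.smul_apply, smul_eq_mul]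
    exact continuous_const.add (continuous_id.mul continuous_const)
  have h0 : (fun t : ℚ => x + t • w) 0 ∈ interior S := by simpa using hx
  have hnhds : (fun t : ℚ => x + t • w) ⁻¹' interior S ∈ nhds (0 : ℚ) :=
    hcont.continuousAt.preimage_mem_nhds (isOpen_interior.mem_nhds h0)
  rw [Metric.mem_nhds_iff] at hnhds
  obtain ⟨ε, hε, hball⟩ := hnhds
  obtain ⟨δ, hδ0, hδε⟩ := exists_rat_btwn hε
  refine ⟨δ, by exact_mod_cast hδ0, fun t ht htδ => ?_⟩
  have htball : t ∈ Metric.ball (0 : ℚ) ε := by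
    rw [Metric.mem_ball, Rat.dist_eq]
    push_cast
    rw [sub_zero, abs_of_pos (by exact_mod_cast ht : (0:ℝ) < (t:ℝ))]
    calc (t:ℝ) ≤ (δ:ℝ) := by exact_mod_cast htδ
    _ < ε := hδε
  exact interior_subset (hball htball)

lemma exists_maximal_cone {k : ℕ} {F : Set (Set (Fin k → ℚ))} (hfin : F.Finite)
    {σ : Set (Fin k → ℚ)} (hσ : σ ∈ F) :
    ∃ m ∈ F, σ ⊆ m ∧ ∀ σ' ∈ F, m ⊆ σ' → σ' = m := by
  obtain ⟨m, hm, hmax⟩ := Set.Finite.exists_maximalFor id {σ' ∈ F | σ ⊆ σ'}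
    (hfin.subset (Set.sep_subset _ _)) ⟨σ, hσ, subset_rfl⟩
  exact ⟨m, hm.1, hm.2, fun σ' hσ' hsub => Set.Subset.antisymm (hmax ⟨hσ', hm.2.trans hsub⟩ hsub) hsub⟩

/-- Let `Σ` be a fan in `ℚ^k` all of whose maximal cones are
`k`-dimensional, with convex support. If `τ ∈ Σ` meets the topological
interior of the support, then `τ` is the intersection of all `k`-dimensional
cones of `Σ` having `τ` as a face. -/
theorem gitfan_stmt0 {k : ℕ} (F : Set (Set (Fin k → ℚ))) (hF : IsFan F)
    (hpure : ∀ σ ∈ F, (∀ σ' ∈ F, σ ⊆ σ' → σ' = σ) → coneDim σ = k)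
    (hconv : Convex ℚ (⋃₀ F)) (τ : Set (Fin k → ℚ)) (hτ : τ ∈ F)
    (hint : (τ ∩ interior (⋃₀ F)).Nonempty) :
    τ = ⋂₀ {σ | σ ∈ F ∧ coneDim σ = k ∧ IsFaceOf τ σ} := by
  classical
  obtain ⟨x₁, hx₁τ, hx₁i⟩ := hint
  obtain ⟨hτcone, hτpoly⟩ := hF.cone τ hτ
  obtain ⟨sτ, hsτ⟩ := hτpoly
  have hSadd : ∀ a ∈ ⋃₀ F, ∀ b ∈ ⋃₀ F, a + b ∈ ⋃₀ F := by
    intro a ha b hb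
    have hmid : (1/2 : ℚ) • a + (1/2 : ℚ) • b ∈ ⋃₀ F :=
      hconv ha hb (by norm_num) (by norm_num) (by norm_num)
    obtain ⟨σ, hσF, hσmem⟩ := hmid
    refine ⟨σ, hσF, ?_⟩
    have h2 := (hF.cone σ hσF).1.2.2 2 (by norm_num) _ hσmem
    have heq : a + b = (2:ℚ) • ((1/2:ℚ) • a + (1/2:ℚ) • b) := by
      rw [smul_add, smul_smul, smul_smul]; norm_num
    rwa [← heq] at h2
  have hx₀τ : (∑ v ∈ sτ, v) ∈ τ := by
    rw [hsτ]
    exact mem_genCone_of_coeffs (fun _ => 1) (fun v _ => by norm_num) (by simp)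
  set x := x₁ + ∑ v ∈ sτ, v with hxdef
  have hxτ : x ∈ τ := hτcone.2.1 _ hx₁τ _ hx₀τ
  have hxint : x ∈ interior (⋃₀ F) := interior_add_mem hSadd hx₁i ⟨τ, hτ, hx₀τ⟩
  have hxrelint : ∀ y ∈ τ, ∃ ε : ℚ, 0 < ε ∧ x - ε • y ∈ τ := by
    intro y hy
    rw [hsτ] at hy
    obtain ⟨ty, cy, hty, hcy, rfl⟩ := hy
    have htysub : ty ⊆ sτ := Finset.coe_subset.mp hty
    set M := ∑ v ∈ ty, cy v with hM
    have hM0 : 0 ≤ M := Finset.sum_nonneg fun v _ => hcy v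
    refine ⟨(1 + M)⁻¹, by positivity, ?_⟩
    have hx₀y : (∑ v ∈ sτ, v) - (1+M)⁻¹ • (∑ v ∈ ty, cy v • v)
        ∈ genCone (↑sτ : Set (Fin k → ℚ)) := by
      have hty' : (1+M)⁻¹ • (∑ v ∈ ty, cy v • v)
          = ∑ v ∈ sτ, (if v ∈ ty then (1+M)⁻¹ * cy v else 0) • v := by
        rw [← Finset.sum_subset htysub (fun v hv hv' => by simp [hv'])]
        rw [Finset.smul_sum]
        exact Finset.sum_congr rfl fun v hv => by rw [if_pos hv, smul_smul]
      have hrw : (∑ v ∈ sτ, v) - (1+M)⁻¹ • (∑ v ∈ ty, cy v • v)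
          = ∑ v ∈ sτ, (1 - (if v ∈ ty then (1+M)⁻¹ * cy v else 0)) • v := by
        rw [hty', ← Finset.sum_sub_distrib]
        exact Finset.sum_congr rfl fun v hv => by rw [sub_smul, one_smul]
      refine mem_genCone_of_coeffs _ (fun v hv => ?_) hrw
      by_cases hvty : v ∈ ty
      · simp only [if_pos hvty]
        have h1 : cy v ≤ M := Finset.single_le_sum (fun i _ => hcy i) hvty
        have hpos : (0:ℚ) < 1 + M := by positivity
        have h2 : (1+M)⁻¹ * cy v ≤ (1+M)⁻¹ * M :=
          mul_le_mul_of_nonneg_left h1 (by positivity)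
        have h3 : (1+M)⁻¹ * M < 1 := by
          rw [inv_mul_lt_iff₀ hpos]
          linarith
        linarith
      · simp [hvty]
    have heq : x - (1+M)⁻¹ • (∑ v ∈ ty, cy v • v)
        = x₁ + ((∑ v ∈ sτ, v) - (1+M)⁻¹ • (∑ v ∈ ty, cy v • v)) := by
      rw [hxdef]; abel
    rw [heq]
    exact hτcone.2.1 _ hx₁τ _ (by rw [hsτ]; exact hx₀y)
  apply Set.Subset.antisymm
  · exact Set.subset_sInter fun σ hσ => hσ.2.2.1
  · intro z hz
    obtain ⟨δ, hδ, hseg⟩ := exists_seg (x - z) hxint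
    have hy : ∀ n : ℕ, x + (δ / ((n:ℚ)+1)) • (x - z) ∈ ⋃₀ F := by
      intro n
      have hp : (0:ℚ) < (n:ℚ)+1 := by positivity
      apply hseg _ (div_pos hδ hp)
      rw [div_le_iff₀ hp]
      have hn0 : (0:ℚ) ≤ (n:ℚ) := Nat.cast_nonneg n
      nlinarith
    choose σn hσnF hσnm using hy
    have hpig : ∃ σ₀ : ↥hF.finite.toFinset, {n | σn n = ↑σ₀}.Infinite := by
      obtain ⟨σ₀, hfib⟩ := Finite.exists_infinite_fiber
        (fun n => (⟨σn n, hF.finite.mem_toFinset.mpr (hσnF n)⟩ : ↥hF.finite.toFinset))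
      refine ⟨σ₀, ?_⟩
      rw [← Set.infinite_coe_iff]
      convert hfib using 2
      ext n
      simp [Subtype.ext_iff]
    obtain ⟨σ₀, hS₁⟩ := hpig
    have hσF : (σ₀ : Set (Fin k → ℚ)) ∈ F := hF.finite.mem_toFinset.mp σ₀.2
    obtain ⟨s, hs⟩ := (hF.cone _ hσF).2
    have hcar : ∀ n : ↥{n | σn n = ↑σ₀}, ∃ t : Finset (Fin k → ℚ), t ⊆ s ∧
        LinearIndependent ℚ (fun v : (↑t : Set (Fin k → ℚ)) => (v : Fin k → ℚ)) ∧
        x + (δ / (((n:ℕ):ℚ)+1)) • (x - z) ∈ genCone (↑t : Set (Fin k → ℚ)) := by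
      intro n
      apply caratheodory
      rw [← hs]
      have hmem := hσnm (n : ℕ)
      have heq : σn (n : ℕ) = (σ₀ : Set (Fin k → ℚ)) := n.2
      rwa [heq] at hmem
    choose T hT1 hT2 hT3 using hcar
    haveI : Infinite ↥{n | σn n = ↑σ₀} := Set.infinite_coe_iff.mpr hS₁
    have hpig2 : ∃ t₀ : Finset (Fin k → ℚ), t₀ ⊆ s ∧
        {n : ↥{n | σn n = ↑σ₀} | T n = t₀}.Infinite := by
      obtain ⟨t₀, hfib⟩ := Finite.exists_infinite_fiber
        (fun n : ↥{n | σn n = ↑σ₀} =>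
          (⟨T n, Finset.mem_powerset.mpr (hT1 n)⟩ : ↥s.powerset))
      refine ⟨↑t₀, Finset.mem_powerset.mp t₀.2, ?_⟩
      rw [← Set.infinite_coe_iff]
      convert hfib using 2
      ext n
      simp [Subtype.ext_iff]
    obtain ⟨t₀, ht₀s, hS₂⟩ := hpig2
    obtain ⟨nb, hnb⟩ := hS₂.nonempty
    have hli : LinearIndependent ℚ
        (fun v : (↑t₀ : Set (Fin k → ℚ)) => (v : Fin k → ℚ)) := by
      rw [← show T nb = t₀ from hnb]
      exact hT2 nb
    set S₃ : Set ℕ := Subtype.val '' {n : ↥{n | σn n = ↑σ₀} | T n = t₀} with hS₃def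
    have hS₃ : S₃.Infinite := hS₂.image (Subtype.val_injective.injOn)
    have hmem3 : ∀ n ∈ S₃, x + (δ / ((n:ℚ)+1)) • (x - z) ∈ genCone (↑t₀ : Set (Fin k → ℚ)) := by
      rintro - ⟨n, hn, rfl⟩
      rw [← show T n = t₀ from hn]
      exact hT3 n
    have hxσ : x ∈ (σ₀ : Set (Fin k → ℚ)) := by
      rw [hs]
      exact genCone_mono (Finset.coe_subset.mpr ht₀s) (simplicial_closed hli hδ hS₃ hmem3)
    obtain ⟨m, hmF, hσm, hmmax⟩ := exists_maximal_cone hF.finite hσF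
    obtain ⟨hmcone, -⟩ := hF.cone m hmF
    have hxm : x ∈ m := hσm hxσ
    have hmτ : m ∩ τ = τ := by
      apply Set.Subset.antisymm Set.inter_subset_right
      intro y hy
      obtain ⟨ε, hε, hxy⟩ := hxrelint y hy
      have hface := (hF.inter m hmF τ hτ).2
      have h2 : ε • y ∈ τ := hτcone.2.2 ε hε.le y hy
      have h3 : (x - ε • y) + ε • y ∈ m ∩ τ := by
        rw [sub_add_cancel]; exact ⟨hxm, hxτ⟩
      have h4 := (hface.2 _ hxy _ h2 h3).2
      have h5 : ε⁻¹ • (ε • y) ∈ m := hmcone.2.2 ε⁻¹ (by positivity) _ h4.1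
      rw [smul_smul, inv_mul_cancel₀ hε.ne', one_smul] at h5
      exact ⟨h5, hy⟩
    have hfaceτm : IsFaceOf τ m := by
      have h := (hF.inter m hmF τ hτ).1
      rwa [hmτ] at h
    have hzm : z ∈ m := hz m ⟨hmF, hpure m hmF hmmax, hfaceτm⟩
    obtain ⟨n, hn⟩ := hS₃.nonempty
    set tq : ℚ := δ/((n:ℚ)+1) with htqdef
    have htq0 : 0 < tq := div_pos hδ (by positivity)
    have hym : x + tq • (x - z) ∈ m := by
      apply hσm
      rw [hs]
      exact genCone_mono (Finset.coe_subset.mpr ht₀s) (hmem3 n hn)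
    have hsum : (x + tq • (x - z)) + tq • z = (1 + tq) • x := by
      rw [smul_sub, add_smul, one_smul]; abel
    have h1 : (1 + tq) • x ∈ τ := hτcone.2.2 _ (by positivity) _ hxτ
    have h2 : tq • z ∈ m := hmcone.2.2 _ htq0.le _ hzm
    have h3 := (hfaceτm.2 _ hym _ h2 (by rw [hsum]; exact h1)).2
    have h4 : tq⁻¹ • (tq • z) ∈ τ := hτcone.2.2 _ (by positivity) _ h3
    rwa [smul_smul, inv_mul_cancel₀ htq0.ne', one_smul] at h4
end

section
/- Let Q: Z^r → Z^k be a linear map given by an integer matrix with columns q_1,...,q_r, let a ⊆ K[T_1,...,T_r] be a monomial-free ideal homogeneous with respect to the Z^k-grading deg(T_i) = q_i, and assume Q(γ) is k-dimensional where γ = Q_{≥0}^r. If γ_0 ⪯ γ is an a-face and θ_0 ⪯ Q(γ_0) is a face of the projected cone, then θ_0 is again a projected a-face, i.e. there exists an a-face γ_1 ⪯ γ with Q(γ_1) = θ_0. -/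
open Matrix Finset


/-- `S` (a face of the orthant) is an `a`-face. -/
def IsAFace {K : Type*} [Field K] {r : ℕ} (a : Ideal (MvPolynomial (Fin r) K))
    (S : Set (Fin r)) : Prop :=
  ∃ x : Fin r → K, (∀ i, x i ≠ 0 ↔ i ∈ S) ∧ ∀ f ∈ a, MvPolynomial.eval x f = 0

section Aux
variable {k : ℕ}

lemma dot_sum {ι : Type*} (s : Finset ι) (u : Fin k → ℚ) (f : ι → Fin k → ℚ) :
    u ⬝ᵥ (∑ i ∈ s, f i) = ∑ i ∈ s, u ⬝ᵥ f i := by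
  classical
  induction s using Finset.induction with
  | empty => simp
  | insert _ _ h ih => rw [Finset.sum_insert h, dotProduct_add, ih, Finset.sum_insert h]

lemma sum_dot {ι : Type*} (s : Finset ι) (f : ι → Fin k → ℚ) (u : Fin k → ℚ) :
    (∑ i ∈ s, f i) ⬝ᵥ u = ∑ i ∈ s, f i ⬝ᵥ u := by
  classical
  induction s using Finset.induction with
  | empty => simp
  | insert _ _ h ih => rw [Finset.sum_insert h, add_dotProduct, ih, Finset.sum_insert h]

lemma farkasAux : ∀ (n : ℕ) (v : Fin n → (Fin k → ℚ)) (b : Fin k → ℚ),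
    (∃ c : Fin n → ℚ, (∀ i, 0 ≤ c i) ∧ b = ∑ i, c i • v i) ∨
    (∃ u : Fin k → ℚ, (∀ i, 0 ≤ u ⬝ᵥ v i) ∧ u ⬝ᵥ b < 0) := by
  intro n
  induction n with
  | zero =>
    intro v b
    by_cases hb : b = 0
    · exact Or.inl ⟨fun _ => 0, fun i => le_refl _, by simp [hb]⟩
    · refine Or.inr ⟨-b, fun i => i.elim0, ?_⟩
      have h1 : b ⬝ᵥ b ≠ 0 := fun h => hb (dotProduct_self_eq_zero.mp h)
      have h2 : 0 ≤ b ⬝ᵥ b := Finset.sum_nonneg fun i _ => mul_self_nonneg _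
      have : 0 < b ⬝ᵥ b := lt_of_le_of_ne h2 (Ne.symm h1)
      simpa [neg_dotProduct] using this
  | succ n ih =>
    intro v b
    rcases ih (fun i => v i.succ) b with ⟨c, hc, hb⟩ | ⟨u, hu, hub⟩
    · refine Or.inl ⟨Fin.cons 0 c, ?_, ?_⟩
      · intro i
        refine Fin.cases ?_ ?_ i
        · exact le_refl _
        · exact hc
      · rw [Fin.sum_univ_succ]
        simp only [Fin.cons_zero, Fin.cons_succ, zero_smul, zero_add]
        exact hb
    · by_cases h0 : 0 ≤ u ⬝ᵥ v 0
      · exact Or.inr ⟨u, fun i => Fin.cases h0 hu i, hub⟩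
      · push_neg at h0
        set α := u ⬝ᵥ v 0 with hα
        rcases ih (fun i => v i.succ - ((u ⬝ᵥ v i.succ) / α) • v 0)
            (b - ((u ⬝ᵥ b) / α) • v 0) with ⟨c, hc, hb2⟩ | ⟨w, hw, hwb⟩
        · set s := ∑ i, c i * (u ⬝ᵥ v i.succ) with hs
          have hsnn : 0 ≤ s := Finset.sum_nonneg fun i _ => mul_nonneg (hc i) (hu i)
          set μ := (u ⬝ᵥ b - s) / α with hμ
          have hμpos : 0 < μ := div_pos_of_neg_of_neg (by linarith) h0
          refine Or.inl ⟨Fin.cons μ c, ?_, ?_⟩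
          · intro i
            refine Fin.cases (le_of_lt hμpos) hc i
          · rw [Fin.sum_univ_succ]
            simp only [Fin.cons_zero, Fin.cons_succ]
            have e1 : ∑ i, c i • (v i.succ - ((u ⬝ᵥ v i.succ) / α) • v 0)
                = (∑ i, c i • v i.succ) - (s / α) • v 0 := by
              rw [hs, Finset.sum_div, Finset.sum_smul, ← Finset.sum_sub_distrib]
              refine Finset.sum_congr rfl fun i _ => ?_
              rw [smul_sub, smul_smul, mul_div_assoc]
            rw [e1] at hb2
            have : b = (∑ i, c i • v i.succ) - (s / α) • v 0 + ((u ⬝ᵥ b) / α) • v 0 := by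
              rw [← hb2]; abel
            rw [this, hμ, sub_div, sub_smul]
            abel
        · refine Or.inr ⟨w - ((w ⬝ᵥ v 0) / α) • u, ?_, ?_⟩
          · intro i
            refine Fin.cases ?_ ?_ i
            · rw [sub_dotProduct, smul_dotProduct, smul_eq_mul, ← hα,
                div_mul_cancel₀ _ (ne_of_lt h0)]
              simp
            · intro j
              have := hw j
              rw [dotProduct_sub, dotProduct_smul, smul_eq_mul] at this
              rw [sub_dotProduct, smul_dotProduct, smul_eq_mul]
              have hcomm : (u ⬝ᵥ v j.succ) / α * (w ⬝ᵥ v 0) = (w ⬝ᵥ v 0) / α * (u ⬝ᵥ v j.succ) := by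
                rw [div_mul_eq_mul_div, div_mul_eq_mul_div, mul_comm]
              linarith [this, hcomm]
          · rw [dotProduct_sub, dotProduct_smul, smul_eq_mul] at hwb
            rw [sub_dotProduct, smul_dotProduct, smul_eq_mul]
            have hcomm : (u ⬝ᵥ b) / α * (w ⬝ᵥ v 0) = (w ⬝ᵥ v 0) / α * (u ⬝ᵥ b) := by
              rw [div_mul_eq_mul_div, div_mul_eq_mul_div, mul_comm]
            linarith [hwb, hcomm]

lemma farkas {ι : Type*} [Fintype ι] (v : ι → (Fin k → ℚ)) (b : Fin k → ℚ) :
    (∃ c : ι → ℚ, (∀ i, 0 ≤ c i) ∧ b = ∑ i, c i • v i) ∨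
    (∃ u : Fin k → ℚ, (∀ i, 0 ≤ u ⬝ᵥ v i) ∧ u ⬝ᵥ b < 0) := by
  classical
  obtain ⟨e⟩ : Nonempty (ι ≃ Fin (Fintype.card ι)) := ⟨Fintype.equivFin ι⟩
  rcases farkasAux (Fintype.card ι) (fun i => v (e.symm i)) b with ⟨c, hc, hb⟩ | ⟨u, hu, hub⟩
  · refine Or.inl ⟨fun j => c (e j), fun j => hc _, ?_⟩
    rw [hb]
    exact (Fintype.sum_equiv e _ _ (fun j => by simp)).symm
  · refine Or.inr ⟨u, fun j => ?_, hub⟩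
    simpa using hu (e j)

end Aux

lemma mem_genCone {k : ℕ} {s : Set (Fin k → ℚ)} {v : Fin k → ℚ} (hv : v ∈ s) :
    v ∈ genCone s :=
  ⟨{v}, fun _ => 1, by simpa using hv, fun _ => zero_le_one, by simp⟩

lemma isCone_genCone {k : ℕ} (s : Set (Fin k → ℚ)) : IsCone (genCone s) := by
  classical
  refine ⟨⟨∅, fun _ => 0, by simp, fun _ => le_refl _, by simp⟩, ?_, ?_⟩
  · rintro x ⟨t1, c1, ht1, hc1, rfl⟩ y ⟨t2, c2, ht2, hc2, rfl⟩
    refine ⟨t1 ∪ t2, fun v => (if v ∈ t1 then c1 v else 0) + (if v ∈ t2 then c2 v else 0),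
      ?_, ?_, ?_⟩
    · rw [Finset.coe_union]; exact Set.union_subset ht1 ht2
    · intro v
      have h1 : 0 ≤ (if v ∈ t1 then c1 v else 0) := by split <;> [exact hc1 v; exact le_refl _]
      have h2 : 0 ≤ (if v ∈ t2 then c2 v else 0) := by split <;> [exact hc2 v; exact le_refl _]
      exact add_nonneg h1 h2
    · have e1 : ∑ v ∈ t1 ∪ t2, (if v ∈ t1 then c1 v else 0) • v = ∑ v ∈ t1, c1 v • v := by
        rw [← Finset.sum_subset Finset.subset_union_left (fun v _ hv => by simp [hv])]
        exact Finset.sum_congr rfl fun v hv => by rw [if_pos hv]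
      have e2 : ∑ v ∈ t1 ∪ t2, (if v ∈ t2 then c2 v else 0) • v = ∑ v ∈ t2, c2 v • v := by
        rw [← Finset.sum_subset Finset.subset_union_right (fun v _ hv => by simp [hv])]
        exact Finset.sum_congr rfl fun v hv => by rw [if_pos hv]
      simp only [add_smul, Finset.sum_add_distrib, e1, e2]
  · rintro c hc x ⟨t, c1, ht, hc1, rfl⟩
    refine ⟨t, fun v => c * c1 v, ht, fun v => mul_nonneg hc (hc1 v), ?_⟩
    rw [Finset.smul_sum]
    exact Finset.sum_congr rfl fun v _ => by rw [smul_smul]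

lemma isCone_sum {k : ℕ} {σ : Set (Fin k → ℚ)} (h : IsCone σ) {ι : Type*} (t : Finset ι)
    (g : ι → Fin k → ℚ) (hg : ∀ i ∈ t, g i ∈ σ) : (∑ i ∈ t, g i) ∈ σ :=
  Finset.sum_induction g (· ∈ σ) (fun a b ha hb => h.2.1 a ha b hb) h.1 hg

lemma face_summands {k : ℕ} {τ σ : Set (Fin k → ℚ)} (hface : IsFaceOf τ σ) (hσ : IsCone σ)
    {ι : Type*} (t : Finset ι) (g : ι → Fin k → ℚ) :
    (∀ i ∈ t, g i ∈ σ) → (∑ i ∈ t, g i) ∈ τ → ∀ i ∈ t, g i ∈ τ := by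
  classical
  induction t using Finset.induction with
  | empty => intro _ _ i hi; exact absurd hi (Finset.notMem_empty i)
  | @insert a t hnot ih =>
    intro hg hsum
    rw [Finset.sum_insert hnot] at hsum
    have h2 := hface.2 _ (hg _ (Finset.mem_insert_self _ _)) _
      (isCone_sum hσ t g fun i hi => hg i (Finset.mem_insert_of_mem hi)) hsum
    intro i hi
    rcases Finset.mem_insert.mp hi with rfl | hi'
    · exact h2.1
    · exact ih (fun j hj => hg j (Finset.mem_insert_of_mem hj)) h2.2 i hi'

/-- Let `a` be a monomial-free ideal, homogeneous for the
`ℤ^k`-grading `deg T_i = q_i`, with `Q(γ)` of full dimension `k`.  If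
`γ₀ = cone(e_i : i ∈ S)` is an `a`-face and `θ₀` is a face of the projected
cone `Q(γ₀) = cone(q_i : i ∈ S)`, then `θ₀` is again a projected `a`-face:
there is an `a`-face `γ₁` with `Q(γ₁) = θ₀`. -/
theorem gitfan_stmt7 {K : Type*} [Field K] [IsAlgClosed K] [CharZero K] {r k : ℕ}
    (q : Fin r → Fin k → ℤ) (a : Ideal (MvPolynomial (Fin r) K))
    (hmf : ∀ m : Fin r →₀ ℕ, MvPolynomial.monomial m (1 : K) ∉ a)
    (hhom : ∀ f ∈ a, ∀ d : Fin k → ℤ,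
      MvPolynomial.weightedHomogeneousComponent q d f ∈ a)
    (hdim : coneDim (genCone (Set.range fun i j => (q i j : ℚ))) = k)
    (S : Set (Fin r)) (hS : IsAFace a S)
    (θ0 : Set (Fin k → ℚ)) (hθ0 : IsCone θ0)
    (hface : IsFaceOf θ0 (genCone ((fun i j => (q i j : ℚ)) '' S))) :
    ∃ S1 : Set (Fin r), IsAFace a S1 ∧ genCone ((fun i j => (q i j : ℚ)) '' S1) = θ0 := by
  classical
  set qQ : Fin r → Fin k → ℚ := fun i j => (q i j : ℚ) with hqQ
  set σ : Set (Fin k → ℚ) := genCone (qQ '' S) with hσdef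
  have hσcone : IsCone σ := isCone_genCone _
  have hqS : ∀ i ∈ S, qQ i ∈ σ := fun i hi => mem_genCone ⟨i, hi, rfl⟩
  set S1 : Set (Fin r) := {i | i ∈ S ∧ qQ i ∈ θ0} with hS1
  -- Step 1 : a linear functional positive on `S \ S1`, zero on `S1`, nonneg on `S`.
  have key : ∀ i0 : Fin r, ∃ u : Fin k → ℚ, (∀ i ∈ S, 0 ≤ u ⬝ᵥ qQ i) ∧
      (∀ i ∈ S1, u ⬝ᵥ qQ i = 0) ∧ (i0 ∈ S → qQ i0 ∉ θ0 → 0 < u ⬝ᵥ qQ i0) := by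
    intro i0
    by_cases h : i0 ∈ S ∧ qQ i0 ∉ θ0
    case neg => exact ⟨0, by simp, by simp, fun h1 h2 => absurd ⟨h1, h2⟩ h⟩
    obtain ⟨hi0S, hi0⟩ := h
    rcases farkas (ι := {i // i ∈ S} ⊕ {i // i ∈ S1})
        (Sum.elim (fun i => qQ i.1) (fun i => -qQ i.1)) (-qQ i0) with ⟨c, hc, hb⟩ | ⟨u, hu, hub⟩
    · exfalso
      rw [Fintype.sum_sum_type] at hb
      simp only [Sum.elim_inl, Sum.elim_inr, smul_neg] at hb
      set A := ∑ i : {i // i ∈ S}, c (Sum.inl i) • qQ i.1 with hA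
      set B := ∑ i : {i // i ∈ S1}, c (Sum.inr i) • qQ i.1 with hB
      have hb' : -qQ i0 = A + -B := by
        rw [hb, hA, hB, ← Finset.sum_neg_distrib]
      have h2 : qQ i0 = B - A := by
        rw [← neg_neg (qQ i0), hb']; abel
      have hz : qQ i0 + A ∈ θ0 := by
        have : qQ i0 + A = B := by rw [h2]; abel
        rw [this, hB]
        exact isCone_sum hθ0 _ _ fun i _ => hθ0.2.2 _ (hc _) _ i.2.2
      have hA' : A ∈ σ := isCone_sum hσcone _ _ fun i _ => hσcone.2.2 _ (hc _) _ (hqS i.1 i.2)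
      exact hi0 ((hface.2 _ (hqS i0 hi0S) _ hA' hz).1)
    · refine ⟨u, fun i hi => by simpa using hu (Sum.inl ⟨i, hi⟩), fun i hi => ?_, fun _ _ => ?_⟩
      · have h1 : 0 ≤ u ⬝ᵥ qQ i := by simpa using hu (Sum.inl ⟨i, hi.1⟩)
        have h2 : 0 ≤ u ⬝ᵥ (-qQ i) := by simpa using hu (Sum.inr ⟨i, hi⟩)
        rw [dotProduct_neg] at h2
        linarith
      · rw [dotProduct_neg] at hub
        linarith
  choose U hU1 hU2 hU3 using key
  set u : Fin k → ℚ := ∑ i0 : Fin r, U i0 with hu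
  have huS : ∀ i ∈ S, 0 ≤ u ⬝ᵥ qQ i := by
    intro i hi
    rw [hu, sum_dot]
    exact Finset.sum_nonneg fun j _ => hU1 j i hi
  have huS1 : ∀ i ∈ S1, u ⬝ᵥ qQ i = 0 := by
    intro i hi
    rw [hu, sum_dot]
    exact Finset.sum_eq_zero fun j _ => hU2 j i hi
  have huB : ∀ i ∈ S, qQ i ∉ θ0 → 0 < u ⬝ᵥ qQ i := by
    intro i hi hnot
    rw [hu, sum_dot]
    exact Finset.sum_pos' (fun j _ => hU1 j i hi) ⟨i, Finset.mem_univ i, hU3 i hi hnot⟩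
  -- Step 2 : S1 is an a-face.
  obtain ⟨x, hx, hxa⟩ := hS
  set x' : Fin r → K := fun i => if i ∈ S1 then x i else 0 with hx'def
  have hx' : ∀ i, x' i ≠ 0 ↔ i ∈ S1 := by
    intro i
    by_cases h : i ∈ S1
    · simp [hx'def, h, (hx i).mpr h.1]
    · simp [hx'def, h]
  have hudeg : ∀ m : Fin r →₀ ℕ,
      u ⬝ᵥ (fun j => (((Finsupp.weight q m : Fin k → ℤ)) j : ℚ))
        = ∑ i ∈ m.support, (m i : ℚ) * (u ⬝ᵥ qQ i) := by
    intro m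
    simp only [dotProduct, Finsupp.weight_apply, Finsupp.sum, Finset.sum_apply,
      Pi.smul_apply, smul_eq_mul, nsmul_eq_mul, Int.cast_sum, Int.cast_mul, Int.cast_natCast,
      hqQ, Finset.mul_sum]
    rw [Finset.sum_comm]
    exact Finset.sum_congr rfl fun i _ => Finset.sum_congr rfl fun j _ => by
      push_cast [Pi.mul_apply, Pi.natCast_apply]
      ring
  have hvanish : ∀ f ∈ a, MvPolynomial.eval x' f = 0 := by
    intro f hf
    set D : Finset (Fin k → ℤ) :=
      (f.support.image fun m => (Finsupp.weight q m : Fin k → ℤ)).filter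
        (fun d => u ⬝ᵥ (fun j => (d j : ℚ)) = 0) with hD
    set P : MvPolynomial (Fin r) K := ∑ d ∈ D, MvPolynomial.weightedHomogeneousComponent q d f
      with hP
    have hPa : P ∈ a := Ideal.sum_mem _ fun d _ => hhom f hf d
    have hcoeff : ∀ m : Fin r →₀ ℕ, MvPolynomial.coeff m P =
        if u ⬝ᵥ (fun j => (((Finsupp.weight q m : Fin k → ℤ)) j : ℚ)) = 0
        then MvPolynomial.coeff m f else 0 := by
      intro m
      rw [hP, MvPolynomial.coeff_sum]
      simp only [MvPolynomial.coeff_weightedHomogeneousComponent]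
      rw [Finset.sum_ite_eq D (Finsupp.weight q m) (fun _ => MvPolynomial.coeff m f)]
      by_cases hDm : (Finsupp.weight q m : Fin k → ℤ) ∈ D
      · rw [if_pos hDm, if_pos ((Finset.mem_filter.mp hDm).2)]
      · rw [if_neg hDm]
        by_cases hcond : u ⬝ᵥ (fun j => (((Finsupp.weight q m : Fin k → ℤ)) j : ℚ)) = 0
        · rw [if_pos hcond]
          by_contra hne
          exact hDm (Finset.mem_filter.mpr ⟨Finset.mem_image.mpr
            ⟨m, MvPolynomial.mem_support_iff.mpr fun h => hne h.symm, rfl⟩, hcond⟩)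
        · rw [if_neg hcond]
    have hPsupp : P.support ⊆ f.support := by
      intro m hm
      rw [MvPolynomial.mem_support_iff] at hm ⊢
      intro h
      rw [hcoeff m, h] at hm
      simp at hm
    have hmain : MvPolynomial.eval x' f = MvPolynomial.eval x P := by
      rw [MvPolynomial.eval_eq x' f, MvPolynomial.eval_eq x P]
      have hext : ∑ m ∈ P.support, MvPolynomial.coeff m P * ∏ i ∈ m.support, x i ^ m i
          = ∑ m ∈ f.support, MvPolynomial.coeff m P * ∏ i ∈ m.support, x i ^ m i :=
        Finset.sum_subset hPsupp (fun m _ hnm => by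
          rw [MvPolynomial.notMem_support_iff.mp hnm, zero_mul])
      rw [hext]
      refine Finset.sum_congr rfl fun m hm => ?_
      rw [hcoeff m, hudeg m]
      by_cases h1 : ↑m.support ⊆ S1
      · have hcond : ∑ i ∈ m.support, (m i : ℚ) * (u ⬝ᵥ qQ i) = 0 :=
          Finset.sum_eq_zero fun i hi => by rw [huS1 i (h1 hi), mul_zero]
        rw [if_pos hcond]
        congr 1
        refine Finset.prod_congr rfl fun i hi => ?_
        rw [show x' i = x i from if_pos (h1 hi)]
      · obtain ⟨i1, hi1m, hi1⟩ : ∃ i ∈ m.support, i ∉ S1 := by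
          simpa [Set.subset_def] using h1
        have hL : (∏ i ∈ m.support, x' i ^ m i) = 0 :=
          Finset.prod_eq_zero hi1m (by
            rw [show x' i1 = 0 from if_neg hi1]
            exact zero_pow (Finsupp.mem_support_iff.mp hi1m))
        rw [hL, mul_zero]
        by_cases h2 : ↑m.support ⊆ S
        · have hi1S : i1 ∈ S := h2 hi1m
          have hi1not : qQ i1 ∉ θ0 := fun hc => hi1 ⟨hi1S, hc⟩
          have hpos : 0 < ∑ i ∈ m.support, (m i : ℚ) * (u ⬝ᵥ qQ i) :=
            Finset.sum_pos' (fun i hi => mul_nonneg (Nat.cast_nonneg _) (huS i (h2 hi)))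
              ⟨i1, hi1m, mul_pos
                (by exact_mod_cast Nat.pos_of_ne_zero (Finsupp.mem_support_iff.mp hi1m))
                (huB i1 hi1S hi1not)⟩
          rw [if_neg (ne_of_gt hpos), zero_mul]
        · obtain ⟨i2, hi2m, hi2⟩ : ∃ i ∈ m.support, i ∉ S := by
            simpa [Set.subset_def] using h2
          have hR : (∏ i ∈ m.support, x i ^ m i) = 0 :=
            Finset.prod_eq_zero hi2m (by
              rw [show x i2 = 0 from not_not.mp fun h => hi2 ((hx i2).mp h)]
              exact zero_pow (Finsupp.mem_support_iff.mp hi2m))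
          rw [hR, mul_zero]
    rw [hmain]
    exact hxa P hPa
  -- Step 3 : the cone generated by S1 equals θ0.
  have hgen : genCone (qQ '' S1) = θ0 := by
    apply Set.Subset.antisymm
    · rintro z ⟨t, c, ht, hc, rfl⟩
      refine Finset.sum_induction _ (· ∈ θ0) (fun a b ha hb => hθ0.2.1 a ha b hb) hθ0.1 ?_
      intro v hv
      obtain ⟨i, hi, rfl⟩ := ht hv
      exact hθ0.2.2 (c _) (hc _) _ hi.2
    · intro z hz
      obtain ⟨t, c, ht, hc, hrep⟩ := hface.1 hz
      have hmem : ∀ v ∈ t, c v • v ∈ σ := fun v hv =>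
        hσcone.2.2 _ (hc v) _ (mem_genCone (ht hv))
      have hsummands := face_summands hface hσcone t (fun v => c v • v) hmem (hrep ▸ hz)
      refine ⟨t.filter (· ∈ θ0), c, ?_, hc, ?_⟩
      · intro v hv
        simp only [Finset.coe_filter, Set.mem_setOf_eq] at hv
        obtain ⟨i, hiS, rfl⟩ := ht hv.1
        exact ⟨i, ⟨hiS, hv.2⟩, rfl⟩
      · rw [hrep]
        refine (Finset.sum_filter_of_ne (fun v hv hne => ?_)).symm
        have hcv : c v ≠ 0 := fun h => hne (by rw [h, zero_smul])
        have hv0 : v = (c v)⁻¹ • (c v • v) := by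
          rw [smul_smul, inv_mul_cancel₀ hcv, one_smul]
        rw [hv0]
        exact hθ0.2.2 _ (inv_nonneg.mpr (hc v)) _ (hsummands v hv)
  exact ⟨S1, ⟨x', hx', hvanish⟩, hgen⟩
end

section
/- Let γ_0 be a face of γ = Q_{≥0}^r, let a ⊆ K[T_1,...,T_r] be an ideal, and let H(γ_0) ⊆ T^r_{γ_0} be the maximal subgroup of the torus T^r_{γ_0} leaving V(T^r_{γ_0}; a_{γ_0}) invariant, with quotient π: T^r_{γ_0} → T^r_{γ_0}/H(γ_0). Then V(T^r_{γ_0}; a) ≠ ∅ if and only if V(T^r_{γ_0}/H(γ_0); π_* a_{γ_0}) ≠ ∅. -/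
/-- The point of `K^r` in the torus orbit `T^r_{γ₀}` corresponding to a point
`t` of the torus `(K^*)^S`, where `S` is the set of indices `i` with
`e_i ∈ γ₀`: coordinate `i ∈ S` is `t_i`, the others are `0`. -/
def embS {K : Type*} [Field K] {r : ℕ} (S : Finset (Fin r))
    (t : {i // i ∈ S} → Kˣ) : Fin r → K :=
  fun i => if h : i ∈ S then (t ⟨i, h⟩ : K) else 0

/-- `V(T^r_{γ₀}; a_{γ₀})`, written in the torus coordinates of the orbit
`T^r_{γ₀} ≅ (K^*)^S` (on the orbit, `a` and `a_{γ₀}` have the same zeros). -/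
def VT {K : Type*} [Field K] {r : ℕ} (a : Ideal (MvPolynomial (Fin r) K))
    (S : Finset (Fin r)) : Set ({i // i ∈ S} → Kˣ) :=
  {t | ∀ f ∈ a, MvPolynomial.eval (embS S t) f = 0}

/-- `H(γ₀)`: the maximal subgroup of the torus `T^r_{γ₀} ≅ (K^*)^S` whose
translation action leaves `V(T^r_{γ₀}; a_{γ₀})` invariant. -/
def HS {K : Type*} [Field K] {r : ℕ} (a : Ideal (MvPolynomial (Fin r) K))
    (S : Finset (Fin r)) : Subgroup ({i // i ∈ S} → Kˣ) where
  carrier := {h | ∀ t, h * t ∈ VT a S ↔ t ∈ VT a S}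
  one_mem' := by intro t; rw [one_mul]
  mul_mem' := by
    intro g h hg hh t
    rw [mul_assoc]
    exact (hg _).trans (hh t)
  inv_mem' := by
    intro h hh t
    simpa [mul_inv_cancel_left] using (hh (h⁻¹ * t)).symm

/-- The push forwards `π_* g`, for `g ∈ a_{γ₀}`, under the quotient map
`π : T^r_{γ₀} → T^r_{γ₀}/H(γ₀)`: functions `h` on the quotient torus with
`π^* h = T^μ g` for some Laurent monomial `T^μ`.  Here
`a_{γ₀} = ⟨ f_{γ₀} : f ∈ a ⟩` with `f_{γ₀}` obtained by setting the variables
`T_i`, `i ∉ S`, to zero. -/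
def pushforwards {K : Type*} [Field K] {r : ℕ} (a : Ideal (MvPolynomial (Fin r) K))
    (S : Finset (Fin r)) : Set ((({i // i ∈ S} → Kˣ) ⧸ HS a S) → K) :=
  {h | ∃ g ∈ a.map (MvPolynomial.aeval fun i : Fin r =>
        if i ∈ S then MvPolynomial.X i else (0 : MvPolynomial (Fin r) K)).toRingHom,
    ∃ μ : {i // i ∈ S} → ℤ, ∀ t : {i // i ∈ S} → Kˣ,
      h (QuotientGroup.mk t) =
        ((∏ i, t i ^ μ i : Kˣ) : K) * MvPolynomial.eval (embS S t) g}

open MvPolynomial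

theorem monomial_mem {K : Type*} [Field K] [IsAlgClosed K] {r : ℕ}
    (a : Ideal (MvPolynomial (Fin r) K)) (S : Finset (Fin r))
    (hempty : ∀ t : {i // i ∈ S} → Kˣ, ∃ f ∈ a, MvPolynomial.eval (embS S t) f ≠ 0) :
    ∃ n : ℕ, ((∏ j : {i // i ∈ S}, X j.1) ^ n : MvPolynomial (Fin r) K) ∈
      a.map (MvPolynomial.aeval fun i : Fin r =>
        if i ∈ S then MvPolynomial.X i else (0 : MvPolynomial (Fin r) K)).toRingHom := by
  classical
  set σ := {i // i ∈ S}
  let ψ : MvPolynomial (Fin r) K →ₐ[K] MvPolynomial (Option σ) K :=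
    aeval fun i => if h : i ∈ S then X (some ⟨i, h⟩) else 0
  let ψ₀ : MvPolynomial (Fin r) K →ₐ[K] MvPolynomial σ K :=
    aeval fun i => if h : i ∈ S then X ⟨i, h⟩ else 0
  let w : MvPolynomial σ K := ∏ j, X j
  let rel : MvPolynomial (Option σ) K := X none * ∏ j, X (some j) - 1
  let J : Ideal (MvPolynomial (Option σ) K) := a.map ψ.toRingHom ⊔ Ideal.span {rel}
  have hJtop : J = ⊤ := by
    rw [← Ideal.radical_eq_top, ← vanishingIdeal_zeroLocus_eq_radical (K := K)]
    have hzero : MvPolynomial.zeroLocus K J = ∅ := by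
      rw [Set.eq_empty_iff_forall_notMem]
      intro v hv
      have hrel : eval v rel = 0 :=
        hv rel (Ideal.mem_sup_right (Ideal.subset_span (Set.mem_singleton rel)))
      have hrel' : v none * ∏ j, v (some j) = 1 := by
        have := sub_eq_zero.mp (by simpa [rel] using hrel)
        simpa using this
      have hne : ∀ j : σ, v (some j) ≠ 0 := by
        intro j h0
        rw [Finset.prod_eq_zero (Finset.mem_univ j) h0, mul_zero] at hrel'
        exact zero_ne_one hrel'
      obtain ⟨f, hf, hfne⟩ := hempty fun j => Units.mk0 (v (some j)) (hne j)
      apply hfne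
      have hval : eval v (ψ f) = 0 :=
        hv (ψ f) (Ideal.mem_sup_left (Ideal.mem_map_of_mem _ hf))
      rw [← hval]
      have : ((eval v).comp ψ.toRingHom : MvPolynomial (Fin r) K →+* K)
          = eval (embS S fun j => Units.mk0 (v (some j)) (hne j)) := by
        apply ringHom_ext
        · intro c; simp [ψ]
        · intro i; simp only [RingHom.coe_comp, Function.comp_apply, AlgHom.toRingHom_eq_coe,
            RingHom.coe_coe, ψ, aeval_X, embS]
          split
          · rename_i h; simp [embS, h]
          · rename_i h; simp [embS, h]
      exact (congrArg (fun F : MvPolynomial (Fin r) K →+* K => F f) this).symm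
    rw [hzero, vanishingIdeal_empty]
  have h1J : (1 : MvPolynomial (Option σ) K) ∈ J := hJtop ▸ Submodule.mem_top
  obtain ⟨u, hu, v', hv', huv⟩ := Submodule.mem_sup.mp h1J
  -- localization
  let L := Localization.Away w
  let α : MvPolynomial (Option σ) K →ₐ[K] L :=
    aeval fun o => o.elim (IsLocalization.Away.invSelf w)
      (fun j => algebraMap (MvPolynomial σ K) L (X j))
  have hαrel : α rel = 0 := by
    have : α rel = IsLocalization.Away.invSelf w * algebraMap (MvPolynomial σ K) L w - 1 := by
      simp [rel, α, w, map_prod]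
    rw [this, mul_comm, IsLocalization.Away.mul_invSelf, sub_self]
  have hαv' : α v' = 0 := by
    obtain ⟨c, hc⟩ := Ideal.mem_span_singleton'.mp hv'
    rw [← hc, map_mul, hαrel, mul_zero]
  have h1 : (1 : L) = α u := by
    have := congrArg α huv
    rw [map_add, map_one, hαv', add_zero] at this
    exact this.symm
  set b : Ideal (MvPolynomial σ K) := a.map ψ₀.toRingHom with hb
  have hαu : α u ∈ b.map (algebraMap (MvPolynomial σ K) L) := by
    have h1' : α u ∈ (a.map ψ.toRingHom).map α.toRingHom := Ideal.mem_map_of_mem _ hu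
    rw [Ideal.map_map] at h1'
    have hcomp : (α.toRingHom.comp ψ.toRingHom : MvPolynomial (Fin r) K →+* L)
        = (algebraMap (MvPolynomial σ K) L).comp ψ₀.toRingHom := by
      apply ringHom_ext
      · intro c
        simp only [RingHom.coe_comp, Function.comp_apply, AlgHom.toRingHom_eq_coe,
          RingHom.coe_coe, aeval_C, ψ, ψ₀]
        rw [AlgHom.commutes, ← IsScalarTower.algebraMap_apply]
      · intro i
        simp only [RingHom.coe_comp, Function.comp_apply, AlgHom.toRingHom_eq_coe,
          RingHom.coe_coe, ψ, ψ₀, aeval_X]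
        split
        · simp [α]
        · simp
    rw [hcomp, ← Ideal.map_map] at h1'
    exact h1'
  rw [← h1] at hαu
  obtain ⟨⟨x, s⟩, hx⟩ := (IsLocalization.mem_map_algebraMap_iff (Submonoid.powers w) L).mp hαu
  obtain ⟨n, hn⟩ := s.2
  have hn' : w ^ n = (s : MvPolynomial σ K) := hn
  have hw : w ≠ 0 := Finset.prod_ne_zero_iff.mpr fun j _ => X_ne_zero j
  have hle : Submonoid.powers w ≤ nonZeroDivisors (MvPolynomial σ K) := by
    rintro z ⟨m, rfl⟩
    exact pow_mem (mem_nonZeroDivisors_of_ne_zero hw) m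
  have hinj := IsLocalization.injective L hle
  have hs : (s : MvPolynomial σ K) = x := hinj (by rw [← hx, one_mul])
  have hwn : w ^ n ∈ b := by rw [hn', hs]; exact x.2
  -- map down to MvPolynomial (Fin r) K
  let χ : MvPolynomial σ K →ₐ[K] MvPolynomial (Fin r) K := aeval fun j => X j.1
  refine ⟨n, ?_⟩
  have hmem : χ (w ^ n) ∈ b.map χ.toRingHom := Ideal.mem_map_of_mem _ hwn
  rw [hb, Ideal.map_map] at hmem
  have hcomp : (χ.toRingHom.comp ψ₀.toRingHom : MvPolynomial (Fin r) K →+* MvPolynomial (Fin r) K)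
      = (MvPolynomial.aeval fun i : Fin r =>
        if i ∈ S then MvPolynomial.X i else (0 : MvPolynomial (Fin r) K)).toRingHom := by
    apply ringHom_ext
    · intro c; simp [ψ₀, χ]
    · intro i
      simp only [RingHom.coe_comp, Function.comp_apply, AlgHom.toRingHom_eq_coe,
        RingHom.coe_coe, ψ₀, χ, aeval_X]
      split
      · simp
      · simp
  rw [hcomp] at hmem
  have hχw : χ (w ^ n) = (∏ j : σ, X j.1) ^ n := by
    simp [χ, w, map_pow, map_prod]
  rwa [hχw] at hmem


/-- `V(T^r_{γ₀}; a) ≠ ∅` if and only if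
`V(T^r_{γ₀}/H(γ₀); π_* a_{γ₀}) ≠ ∅`, where `π_* a_{γ₀}` is the ideal
generated by the push forwards of elements of `a_{γ₀}`. -/
theorem gitfan_stmt14 {K : Type*} [Field K] [IsAlgClosed K] [CharZero K] {r : ℕ}
    (a : Ideal (MvPolynomial (Fin r) K)) (S : Finset (Fin r)) :
    (∃ x : Fin r → K, (∀ i, x i ≠ 0 ↔ i ∈ S) ∧ ∀ f ∈ a, MvPolynomial.eval x f = 0)
    ↔ ∃ y : ({i // i ∈ S} → Kˣ) ⧸ HS a S,
        ∀ h ∈ Ideal.span (pushforwards a S), h y = 0 := by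
  classical
  constructor
  · rintro ⟨x, hx1, hx2⟩
    set t : {i // i ∈ S} → Kˣ := fun j => Units.mk0 (x j.1) ((hx1 j.1).mpr j.2) with ht
    have hemb : embS S t = x := by
      funext i
      by_cases h : i ∈ S
      · simp [embS, h, ht]
      · simp only [embS, dif_neg h]
        by_contra h0
        exact h ((hx1 i).mp fun e => h0 e.symm)
    refine ⟨QuotientGroup.mk t, ?_⟩
    intro h hh
    have key : ∀ g ∈ pushforwards a S, g (QuotientGroup.mk t) = 0 := by
      rintro g ⟨p, hp, μ, hμ⟩
      rw [hμ t]
      have hcomp : ((eval (embS S t)).comp (MvPolynomial.aeval fun i : Fin r =>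
          if i ∈ S then MvPolynomial.X i
          else (0 : MvPolynomial (Fin r) K)).toRingHom) = eval x := by
        apply ringHom_ext
        · intro c; simp
        · intro i
          simp only [RingHom.coe_comp, Function.comp_apply, AlgHom.toRingHom_eq_coe,
            RingHom.coe_coe, aeval_X, eval_X]
          split
          · rw [eval_X, hemb]
          · rename_i hni
            rw [map_zero]
            by_contra h0
            exact hni ((hx1 i).mp fun e => h0 e.symm)
      have hle : a.map (MvPolynomial.aeval fun i : Fin r =>
          if i ∈ S then MvPolynomial.X i
          else (0 : MvPolynomial (Fin r) K)).toRingHom ≤ RingHom.ker (eval (embS S t)) := by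
        rw [Ideal.map_le_iff_le_comap]
        intro f hf
        have heq := congrArg (fun F : MvPolynomial (Fin r) K →+* K => F f) hcomp
        rw [Ideal.mem_comap, RingHom.mem_ker]
        exact heq.trans (hx2 f hf)
      rw [hle hp, mul_zero]
    have hker : Ideal.span (pushforwards a S) ≤
        RingHom.ker (Pi.evalRingHom
          (fun _ : ({i // i ∈ S} → Kˣ) ⧸ HS a S => K) (QuotientGroup.mk t)) := by
      rw [Ideal.span_le]
      intro g hg
      show g (QuotientGroup.mk t) = 0
      exact key g hg
    exact hker hh
  · rintro ⟨y, hy⟩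
    by_contra hne
    push_neg at hne
    have hempty : ∀ t : {i // i ∈ S} → Kˣ, ∃ f ∈ a, eval (embS S t) f ≠ 0 := by
      intro t
      refine hne (embS S t) fun i => ?_
      constructor
      · intro h; by_contra hS; simp [embS, hS] at h
      · intro h; simp [embS, h]
    obtain ⟨n, hn⟩ := monomial_mem a S hempty
    have hone : (fun _ : ({i // i ∈ S} → Kˣ) ⧸ HS a S => (1 : K)) ∈ pushforwards a S := by
      refine ⟨_, hn, fun _ => -(n : ℤ), fun t => ?_⟩
      have he : eval (embS S t) ((∏ j : {i // i ∈ S}, X j.1) ^ n)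
          = (∏ j, ((t j : K))) ^ n := by
        rw [map_pow, map_prod]
        congr 1
        refine Finset.prod_congr rfl fun j _ => ?_
        simp [embS, j.2]
      have hunits : (∏ j, t j ^ (-(n : ℤ))) = ((∏ j, t j) ^ n)⁻¹ := by
        rw [← Finset.prod_pow, ← Finset.prod_inv_distrib]
        exact Finset.prod_congr rfl fun j _ => by rw [zpow_neg, zpow_natCast]
      have hPn : (∏ j, ((t j : K))) = ((∏ j, t j : Kˣ) : K) :=
        (map_prod (Units.coeHom K) _ _).symm
      rw [he, hPn, hunits]
      rw [Units.val_inv_eq_inv_val, Units.val_pow_eq_pow_val]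
      exact (inv_mul_cancel₀ (pow_ne_zero _ (Units.ne_zero _))).symm
    exact one_ne_zero (hy _ (Ideal.subset_span hone))
end
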